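/- arXiv:1701.08554 — 2 statements merged into one kernel-verified Lean document; each statement's English description precedes it below -/
import Mathlib

section
/- For every Hermitian Toeplitz matrix T of size n that is positive semidefinite and of rank r, there exist frequencies f_1,...,f_r in [0,1) and positive reals d_1,...,d_r such that T = Σ_k d_k a(f_k) a(f_k)^*, where a(f) = (1, e^{2πif}, ..., e^{2πi(n-1)f})^T. -/
open Matrix Complex Set
open scoped ComplexOrder

/-- The complex exponential atom `a(f) ∈ ℂ^n`, entries `e^{2πifj}`. -/
noncomputable def atom (n : ℕ) (f : ℝ) : Fin n → ℂ :=
  fun j => Complex.exp (Complex.I * ((2 * Real.pi * f * (j : ℕ) : ℝ) : ℂ))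

/-- The Hermitian Toeplitz generator: `toep n u` is the Hermitian Toeplitz matrix
whose first row is `u`. -/
noncomputable def toep (n : ℕ) (u : Fin n → ℂ) : Matrix (Fin n) (Fin n) ℂ :=
  Matrix.of fun j k =>
    if _h : (j : ℕ) ≤ (k : ℕ) then u ⟨(k : ℕ) - (j : ℕ), lt_of_le_of_lt (Nat.sub_le _ _) k.isLt⟩
    else star (u ⟨(j : ℕ) - (k : ℕ), lt_of_le_of_lt (Nat.sub_le _ _) j.isLt⟩)




private lemma ct_rank_add_le {n : ℕ} (A B : Matrix (Fin n) (Fin n) ℂ) :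
    (A + B).rank ≤ A.rank + B.rank := by
  rw [Matrix.rank, Matrix.rank, Matrix.rank]
  have h : LinearMap.range (A + B).mulVecLin ≤
      LinearMap.range A.mulVecLin ⊔ LinearMap.range B.mulVecLin := by
    rintro x ⟨y, rfl⟩
    rw [Matrix.mulVecLin_add]
    exact Submodule.add_mem_sup (LinearMap.mem_range_self _ y) (LinearMap.mem_range_self _ y)
  exact le_trans (Submodule.finrank_mono h) (Submodule.finrank_add_le_finrank_add_finrank _ _)

private lemma ct_rank_smul_vecMulVec_le {n : ℕ} (d : ℝ) (w v : Fin n → ℂ) :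
    (d • Matrix.vecMulVec w v).rank ≤ 1 := by
  have h : d • Matrix.vecMulVec w v = Matrix.vecMulVec (fun j => (d : ℂ) * w j) v := by
    ext j k
    simp [Matrix.vecMulVec_apply, Complex.real_smul]
    ring
  rw [h, Matrix.vecMulVec_eq (Fin 1)]
  refine le_trans (Matrix.rank_mul_le_left _ _) ?_
  exact (Matrix.rank_le_card_width (Matrix.replicateCol (Fin 1) (fun j => (d : ℂ) * w j))).trans (by simp)

private lemma ct_exists_freq {z : ℂ} (hz : ‖z‖ = 1) :
    ∃ f ∈ Set.Ico (0:ℝ) 1, Complex.exp (Complex.I * ((2 * Real.pi * f : ℝ) : ℂ)) = z := by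
  have hπ : (0:ℝ) < Real.pi := Real.pi_pos
  have ha1 : -Real.pi < z.arg := Complex.neg_pi_lt_arg z
  have ha2 : z.arg ≤ Real.pi := Complex.arg_le_pi z
  have hexp : Complex.exp (z.arg * Complex.I) = z := by
    have := Complex.norm_mul_exp_arg_mul_I z
    rwa [hz, Complex.ofReal_one, one_mul] at this
  by_cases hneg : z.arg < 0
  · refine ⟨z.arg / (2 * Real.pi) + 1, ⟨?_, ?_⟩, ?_⟩
    · have : -(1/2 : ℝ) < z.arg / (2 * Real.pi) := by
        rw [lt_div_iff₀ (by positivity)]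
        nlinarith
      linarith
    · have : z.arg / (2 * Real.pi) < 0 := div_neg_of_neg_of_pos hneg (by positivity)
      linarith
    · have harg : (2 * Real.pi * (z.arg / (2 * Real.pi) + 1) : ℝ) = z.arg + 2 * Real.pi := by
        field_simp
      rw [harg]
      push_cast
      rw [mul_add, Complex.exp_add]
      rw [show Complex.I * (z.arg:ℂ) = z.arg * Complex.I by ring, hexp,
        show Complex.I * (2 * (Real.pi:ℂ)) = 2 * Real.pi * Complex.I by ring,
        Complex.exp_two_pi_mul_I, mul_one]
  · push_neg at hneg
    refine ⟨z.arg / (2 * Real.pi), ⟨by positivity, ?_⟩, ?_⟩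
    · rw [div_lt_one (by positivity)]
      nlinarith
    · have harg : (2 * Real.pi * (z.arg / (2 * Real.pi)) : ℝ) = z.arg := by
        field_simp
      rw [harg, show Complex.I * (z.arg:ℂ) = z.arg * Complex.I by ring, hexp]

private lemma ct_atom_pow {n : ℕ} (f : ℝ) (j : Fin n) :
    atom n f j = Complex.exp (Complex.I * ((2 * Real.pi * f : ℝ) : ℂ)) ^ (j : ℕ) := by
  rw [atom, ← Complex.exp_nat_mul]
  congr 1
  push_cast
  ring


private lemma ct_isometry_spectral {r : ℕ}
    (U : EuclideanSpace ℂ (Fin r) →ₗᵢ[ℂ] EuclideanSpace ℂ (Fin r)) :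
    ∃ (v : OrthonormalBasis (Fin r) ℂ (EuclideanSpace ℂ (Fin r))) (μ : Fin r → ℂ),
      (∀ i, ‖μ i‖ = 1) ∧ ∀ i, U (v i) = μ i • v i := by
  classical
  set E := EuclideanSpace ℂ (Fin r) with hE
  let g : Module.End ℂ E := U.toLinearMap
  -- pick a unimodular ν which is not an eigenvalue of g
  obtain ⟨ν, hν1, hνe⟩ : ∃ ν : ℂ, ‖ν‖ = 1 ∧ ¬ g.HasEigenvalue ν := by
    have hinj : Set.InjOn (fun s : ℝ => Complex.exp ((s : ℂ) * Complex.I))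
        (Set.Ioo (-1:ℝ) 1) := by
      intro a ha b hb hab
      simp only [Complex.exp_eq_exp_iff_exists_int] at hab
      obtain ⟨k, hk⟩ := hab
      have him := congrArg Complex.im hk
      simp [Complex.add_im, Complex.mul_im] at him
      -- him : a = b + k * (2 * π)  (in some form)
      rcases ha with ⟨ha1, ha2⟩
      rcases hb with ⟨hb1, hb2⟩
      have hπ := Real.pi_gt_three
      rcases lt_trichotomy (k : ℝ) 0 with hk0 | hk0 | hk0
      · exfalso
        have hkz : k < 0 := by exact_mod_cast hk0
        have : (k : ℝ) ≤ -1 := by exact_mod_cast (by omega : k ≤ -1)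
        nlinarith
      · have : k = 0 := by exact_mod_cast hk0
        rw [this] at him; simpa using him
      · exfalso
        have : (1 : ℝ) ≤ (k : ℝ) := by exact_mod_cast hk0
        nlinarith
    have hIoo : (Set.Ioo (-1:ℝ) 1).Infinite := Set.Ioo_infinite (by norm_num)
    have himg : ((fun s : ℝ => Complex.exp ((s : ℂ) * Complex.I)) '' Set.Ioo (-1:ℝ) 1).Infinite :=
      hIoo.image hinj
    have hfin : Set.Finite (setOf g.HasEigenvalue) := g.finite_hasEigenvalue
    obtain ⟨z, hz⟩ := (himg.diff hfin).nonempty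
    obtain ⟨⟨s, _, rfl⟩, hz2⟩ := hz
    exact ⟨_, by simp [Complex.norm_exp], hz2⟩
  have hν0 : ν ≠ 0 := by
    intro h; rw [h] at hν1; simp at hν1
  set V : Module.End ℂ E := -(ν⁻¹ • g) with hV
  have hUg : ∀ x, g x = U x := fun x => rfl
  have hVinner : ∀ x y : E, (inner ℂ (V x) (V y) : ℂ) = inner ℂ x y := by
    intro x y
    have hcν : ν⁻¹ * (starRingEnd ℂ) ν⁻¹ = 1 := by
      rw [map_inv₀, ← mul_inv]
      rw [show ν * (starRingEnd ℂ) ν = 1 by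
        rw [Complex.mul_conj, Complex.normSq_eq_norm_sq, hν1]; norm_num]
      norm_num
    simp only [hV, LinearMap.neg_apply, LinearMap.smul_apply, inner_neg_neg,
      inner_smul_left, inner_smul_right]
    change inner ℂ (-(ν⁻¹ • U x) : EuclideanSpace ℂ (Fin r)) (-(ν⁻¹ • U y)) = inner ℂ x y
    rw [inner_neg_neg, inner_smul_right, inner_smul_left, U.inner_map_map, ← mul_assoc, hcν, one_mul]
  have hgν : ∀ x : E, g x = -(ν • V x) := by
    intro x
    simp [hV, smul_smul, mul_inv_cancel₀ hν0]
    exact (neg_neg (g x)).symm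
  have hSinj : Function.Injective ((LinearMap.id + V : Module.End ℂ E)) := by
    rw [← LinearMap.ker_eq_bot, Submodule.eq_bot_iff]
    intro x hx
    by_contra hx0
    apply hνe
    refine Module.End.hasEigenvalue_of_hasEigenvector (x := x) ⟨Module.End.mem_eigenspace_iff.mpr ?_, hx0⟩
    have hx' : x + V x = 0 := hx
    have : V x = -x := by linear_combination (norm := module) hx'
    rw [hgν, this]
    simp
    exact neg_neg (ν • x : EuclideanSpace ℂ (Fin r))
  have hSbij : Function.Bijective ((LinearMap.id + V : Module.End ℂ E)) :=
    ⟨hSinj, (LinearMap.injective_iff_surjective.mp hSinj)⟩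
  set Se : E ≃ₗ[ℂ] E := LinearEquiv.ofBijective _ hSbij with hSe
  have hSe_apply : ∀ a : E, Se a = a + V a := fun a => rfl
  set H : Module.End ℂ E :=
    Complex.I • (((LinearMap.id - V : Module.End ℂ E)) ∘ₗ (Se.symm : E →ₗ[ℂ] E)) with hH
  have hH_apply : ∀ x : E, H x = Complex.I • (Se.symm x - V (Se.symm x)) := by
    intro x; rfl
  have hHsymm : H.IsSymmetric := by
    intro x y
    set a := Se.symm x with ha
    set b := Se.symm y with hb
    have hx : x = a + V a := by rw [ha, ← hSe_apply, Se.apply_symm_apply]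
    have hy : y = b + V b := by rw [hb, ← hSe_apply, Se.apply_symm_apply]
    rw [hH_apply, hH_apply, ← ha, ← hb]
    conv_lhs => rw [hy]
    conv_rhs => rw [hx]
    simp only [inner_smul_left, inner_smul_right, inner_add_left, inner_add_right,
      inner_sub_left, inner_sub_right, Complex.conj_I]
    rw [hVinner a b]
    ring
  have hfr : Module.finrank ℂ E = r := finrank_euclideanSpace_fin
  set v := hHsymm.eigenvectorBasis hfr with hv
  set t := hHsymm.eigenvalues hfr with ht
  have key : ∀ i, H (v i) = ((t i : ℝ) : ℂ) • v i := fun i =>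
    hHsymm.apply_eigenvectorBasis hfr i
  refine ⟨v, fun i => -(ν * ((Complex.I - (t i : ℂ)) / (Complex.I + (t i : ℂ)))), ?_, ?_⟩
  · intro i
    have habs : ‖Complex.I - (t i : ℂ)‖ = ‖Complex.I + (t i : ℂ)‖ := by
      rw [Complex.norm_def, Complex.norm_def]
      congr 1
      simp [Complex.normSq_apply]
    have hne : ‖Complex.I + (t i : ℂ)‖ ≠ 0 := by
      simp only [ne_eq, norm_eq_zero]
      intro h
      have := congrArg Complex.im h
      simp at this
    rw [norm_neg, norm_mul, norm_div, hν1, habs, one_mul, div_self hne]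
  · intro i
    set w := Se.symm (v i) with hw
    have hvw : v i = w + V w := by rw [hw, ← hSe_apply, Se.apply_symm_apply]
    have hden : (Complex.I + (t i : ℂ)) ≠ 0 := by
      intro h
      have := congrArg Complex.im h
      simp at this
    set lam : ℂ := (Complex.I - (t i : ℂ)) / (Complex.I + (t i : ℂ)) with hlam
    have hHw : Complex.I • (w - V w) = ((t i : ℝ) : ℂ) • v i := by
      rw [← hH_apply, key]
    have h1 : (Complex.I - (t i : ℂ)) • w = (Complex.I + (t i : ℂ)) • V w := by
      have h2 : Complex.I • (w - V w) = ((t i : ℝ) : ℂ) • (w + V w) := by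
        rw [hHw, hvw]
      linear_combination (norm := module) h2
    have hVw : V w = lam • w := by
      have h3 := congrArg (fun z => (Complex.I + (t i : ℂ))⁻¹ • z) h1
      simp only [smul_smul] at h3
      rw [inv_mul_cancel₀ hden, one_smul] at h3
      rw [← h3, hlam, div_eq_inv_mul]
    have hVv : V (v i) = lam • v i := by
      rw [hvw, map_add, hVw, _root_.map_smul, hVw, smul_add, smul_smul]
    show U (v i) = _
    rw [← hUg, hgν, hVv, smul_smul, neg_smul]


private lemma ct_gram (n r : ℕ) (T : Matrix (Fin n) (Fin n) ℂ) (hHerm : T.IsHermitian)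
    (hPSD : T.PosSemidef) (hrank : T.rank = r) :
    ∃ b : Fin n → EuclideanSpace ℂ (Fin r), ∀ j k, (inner ℂ (b j) (b k) : ℂ) = T j k := by
  classical
  have hcard : Fintype.card {i // hHerm.eigenvalues i ≠ 0} = r := by
    rw [← hHerm.rank_eq_card_non_zero_eigs, hrank]
  let e : Fin r ≃ {i // hHerm.eigenvalues i ≠ 0} := (Fintype.equivFinOfCardEq hcard).symm
  set V0 : Matrix (Fin n) (Fin n) ℂ := (hHerm.eigenvectorUnitary : Matrix (Fin n) (Fin n) ℂ)
    with hV0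
  set lam := hHerm.eigenvalues with hlam
  have hnonneg : ∀ i, 0 ≤ lam i := fun i => hPSD.eigenvalues_nonneg i
  have hT : ∀ j k, T j k = ∑ x, ((lam x : ℝ) : ℂ) * V0 j x * (starRingEnd ℂ) (V0 k x) := by
    intro j k
    conv_lhs => rw [hHerm.spectral_theorem, Unitary.conjStarAlgAut_apply]
    rw [Matrix.mul_apply]
    refine Finset.sum_congr rfl fun x _ => ?_
    rw [Matrix.mul_diagonal]
    rw [Matrix.star_apply]
    simp only [hV0, Matrix.IsHermitian.eigenvectorUnitary_apply, RCLike.star_def,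
      Function.comp_apply]
    push_cast
    rw [← hlam]
    exact congrArg
      (fun z => z * (starRingEnd ℂ) ((WithLp.equiv 2 (Fin n → ℂ)) (hHerm.eigenvectorBasis x) k))
      (mul_comm ((WithLp.equiv 2 (Fin n → ℂ)) (hHerm.eigenvectorBasis x) j) (((lam x : ℝ) : ℂ)))
  refine ⟨fun j => (WithLp.equiv 2 _).symm
    (fun i => ((Real.sqrt (lam (e i)) : ℝ) : ℂ) * (starRingEnd ℂ) (V0 j (e i))), ?_⟩
  intro j k
  rw [PiLp.inner_apply, hT]
  simp only [RCLike.inner_apply']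
  have hstep : ∀ (i : Fin r),
      (starRingEnd ℂ) (((Real.sqrt (lam (e i)) : ℝ) : ℂ) * (starRingEnd ℂ) (V0 j (e i))) *
        (((Real.sqrt (lam (e i)) : ℝ) : ℂ) * (starRingEnd ℂ) (V0 k (e i)))
      = ((lam (e i) : ℝ) : ℂ) * V0 j (e i) * (starRingEnd ℂ) (V0 k (e i)) := by
    intro i
    rw [_root_.map_mul, Complex.conj_conj, Complex.conj_ofReal]
    rw [show (((Real.sqrt (lam (e i)) : ℝ) : ℂ)) * V0 j (e i) *
        ((((Real.sqrt (lam (e i)) : ℝ) : ℂ)) * (starRingEnd ℂ) (V0 k (e i)))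
        = (((Real.sqrt (lam (e i)) * Real.sqrt (lam (e i)) : ℝ) : ℂ))
          * V0 j (e i) * (starRingEnd ℂ) (V0 k (e i)) by push_cast; ring]
    rw [Real.mul_self_sqrt (hnonneg _)]
  calc ∑ i : Fin r, (starRingEnd ℂ) ((WithLp.equiv 2 _).symm
        (fun i => ((Real.sqrt (lam (e i)) : ℝ) : ℂ) * (starRingEnd ℂ) (V0 j (e i))) i) *
        ((WithLp.equiv 2 _).symm
        (fun i => ((Real.sqrt (lam (e i)) : ℝ) : ℂ) * (starRingEnd ℂ) (V0 k (e i))) i)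
      = ∑ i : Fin r, ((lam (e i) : ℝ) : ℂ) * V0 j (e i) * (starRingEnd ℂ) (V0 k (e i)) := by
        refine Finset.sum_congr rfl fun i _ => ?_
        rw [show ((WithLp.equiv 2 _).symm
          (fun i => ((Real.sqrt (lam (e i)) : ℝ) : ℂ) * (starRingEnd ℂ) (V0 j (e i))) i)
          = ((Real.sqrt (lam (e i)) : ℝ) : ℂ) * (starRingEnd ℂ) (V0 j (e i)) from rfl,
          show ((WithLp.equiv 2 _).symm
          (fun i => ((Real.sqrt (lam (e i)) : ℝ) : ℂ) * (starRingEnd ℂ) (V0 k (e i))) i)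
          = ((Real.sqrt (lam (e i)) : ℝ) : ℂ) * (starRingEnd ℂ) (V0 k (e i)) from rfl]
        exact hstep i
    _ = ∑ x : {i // lam i ≠ 0}, ((lam x : ℝ) : ℂ) * V0 j x * (starRingEnd ℂ) (V0 k x) :=
        Equiv.sum_comp e (fun x : {i // lam i ≠ 0} =>
          ((lam x : ℝ) : ℂ) * V0 j x * (starRingEnd ℂ) (V0 k x))
    _ = ∑ x ∈ Finset.univ.filter (fun x => lam x ≠ 0),
          ((lam x : ℝ) : ℂ) * V0 j x * (starRingEnd ℂ) (V0 k x) :=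
        (Finset.sum_subtype (Finset.univ.filter (fun x => lam x ≠ 0))
          (fun x => by simp)
          (fun x => ((lam x : ℝ) : ℂ) * V0 j x * (starRingEnd ℂ) (V0 k x))).symm
    _ = ∑ x, ((lam x : ℝ) : ℂ) * V0 j x * (starRingEnd ℂ) (V0 k x) := by
        refine Finset.sum_filter_of_ne fun x _ hx => ?_
        intro h0
        apply hx
        rw [h0]
        simp

private noncomputable def ctLcomb {m r : ℕ} (w : Fin m → EuclideanSpace ℂ (Fin r)) :
    (Fin m → ℂ) →ₗ[ℂ] EuclideanSpace ℂ (Fin r) where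
  toFun c := ∑ j, c j • w j
  map_add' c c' := by simp [add_smul, Finset.sum_add_distrib]
  map_smul' a c := by simp [smul_smul, Finset.smul_sum]

private lemma ctLcomb_apply {m r : ℕ} (w : Fin m → EuclideanSpace ℂ (Fin r)) (c : Fin m → ℂ) :
    ctLcomb w c = ∑ j, c j • w j := rfl

private lemma ctLcomb_single {m r : ℕ} (w : Fin m → EuclideanSpace ℂ (Fin r)) (j : Fin m) :
    ctLcomb w (Pi.single j (1:ℂ)) = w j := by
  classical
  rw [ctLcomb_apply, Finset.sum_eq_single j]
  · simp
  · intro k _ hk; rw [Pi.single_eq_of_ne hk]; simp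
  · intro hj; exact absurd (Finset.mem_univ j) hj

private lemma ct_rank_sum_le {n : ℕ} (s : Finset ℝ) (A : ℝ → Matrix (Fin n) (Fin n) ℂ) :
    (∑ x ∈ s, A x).rank ≤ ∑ x ∈ s, (A x).rank := by
  classical
  induction s using Finset.cons_induction with
  | empty => simp [Matrix.rank_zero]
  | cons a s ha ih =>
    rw [Finset.sum_cons, Finset.sum_cons]
    exact le_trans (ct_rank_add_le _ _) (Nat.add_le_add_left ih _)

/-- Carathéodory–Toeplitz: every PSD Hermitian Toeplitz matrix of rank `r` is a
positive combination of `r` rank-one outer products of exponential atoms. -/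
theorem caratheodory_toeplitz (n r : ℕ) (u : Fin n → ℂ) (T : Matrix (Fin n) (Fin n) ℂ)
    (hToep : T = toep n u) (hHerm : T.IsHermitian) (hPSD : T.PosSemidef)
    (hrank : T.rank = r) :
    ∃ (f d : Fin r → ℝ), (∀ k, f k ∈ Set.Ico (0 : ℝ) 1) ∧ (∀ k, 0 < d k) ∧
      T = ∑ k, d k • Matrix.vecMulVec (atom n (f k)) (star (atom n (f k))) := by
  classical
  rcases Nat.eq_zero_or_pos n with h0 | hpos
  · subst h0
    have hT0 : T = 0 := by ext j k; exact j.elim0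
    have hr : r = 0 := by rw [← hrank, hT0, Matrix.rank_zero]
    subst hr
    exact ⟨Fin.elim0, Fin.elim0, fun k => k.elim0, fun k => k.elim0, by
      rw [hT0]; simp⟩
  obtain ⟨m, rfl⟩ : ∃ m, n = m + 1 := ⟨n - 1, by omega⟩
  obtain ⟨b, hGram⟩ := ct_gram (m+1) r T hHerm hPSD hrank
  -- Toeplitz shift invariance
  have hshift : ∀ j k : Fin m, T j.castSucc k.castSucc = T j.succ k.succ := by
    intro j k
    rw [hToep]
    simp only [toep, Matrix.of_apply, Fin.coe_castSucc, Fin.val_succ]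
    by_cases h : (j : ℕ) ≤ (k : ℕ)
    · rw [dif_pos h, dif_pos (by omega)]
      congr 1
      exact Fin.ext (by simp)
    · rw [dif_neg h, dif_neg (by omega)]
      apply congrArg
      apply congrArg
      exact Fin.ext (by simp)
  have hGs : ∀ j k : Fin m,
      (inner ℂ (b j.castSucc) (b k.castSucc) : ℂ) = inner ℂ (b j.succ) (b k.succ) := by
    intro j k; rw [hGram, hGram, hshift]
  -- linear-combination maps
  let Φlo : (Fin m → ℂ) →ₗ[ℂ] EuclideanSpace ℂ (Fin r) := ctLcomb (fun j => b j.castSucc)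
  let Φhi : (Fin m → ℂ) →ₗ[ℂ] EuclideanSpace ℂ (Fin r) := ctLcomb (fun j => b j.succ)
  have hΦinner : ∀ c c' : Fin m → ℂ, (inner ℂ (Φhi c) (Φhi c') : ℂ) = inner ℂ (Φlo c) (Φlo c') := by
    intro c c'
    rw [show Φhi c = ∑ j, c j • b j.succ from rfl, show Φhi c' = ∑ j, c' j • b j.succ from rfl,
      show Φlo c = ∑ j, c j • b j.castSucc from rfl,
      show Φlo c' = ∑ j, c' j • b j.castSucc from rfl]
    rw [sum_inner, sum_inner]
    refine Finset.sum_congr rfl fun j _ => ?_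
    rw [inner_sum, inner_sum]
    refine Finset.sum_congr rfl fun k _ => ?_
    rw [inner_smul_left, inner_smul_left, inner_smul_right, inner_smul_right, hGs]
  have hker : LinearMap.ker Φlo = LinearMap.ker Φhi := by
    ext c
    simp only [LinearMap.mem_ker]
    constructor <;> intro h
    · have := hΦinner c c
      rw [h, inner_zero_left, ← inner_self_eq_zero (𝕜 := ℂ) (x := Φhi c)] at *
      rw [this]
    · have := hΦinner c c
      rw [h, inner_zero_left] at this
      rw [← inner_self_eq_zero (𝕜 := ℂ) (x := Φlo c)]
      exact this.symm
  let Qlo := Φlo.quotKerEquivRange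
  let Qhi := (Submodule.quotEquivOfEq _ _ hker).trans Φhi.quotKerEquivRange
  let U0 : LinearMap.range Φlo ≃ₗ[ℂ] LinearMap.range Φhi := Qlo.symm.trans Qhi
  have hU0 : ∀ c : Fin m → ℂ,
      (U0 ⟨Φlo c, LinearMap.mem_range_self _ c⟩ : EuclideanSpace ℂ (Fin r)) = Φhi c := by
    intro c
    have h1 : Qlo (Submodule.Quotient.mk c) = ⟨Φlo c, LinearMap.mem_range_self _ c⟩ :=
      Subtype.ext (Φlo.quotKerEquivRange_apply_mk c)
    have h2 : Qlo.symm ⟨Φlo c, LinearMap.mem_range_self _ c⟩ = Submodule.Quotient.mk c := by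
      rw [← h1, LinearEquiv.symm_apply_apply]
    show ((Qhi (Qlo.symm ⟨Φlo c, LinearMap.mem_range_self _ c⟩)) : EuclideanSpace ℂ (Fin r)) = _
    rw [h2]
    show ((Φhi.quotKerEquivRange ((Submodule.quotEquivOfEq _ _ hker)
      (Submodule.Quotient.mk c))) : EuclideanSpace ℂ (Fin r)) = Φhi c
    rw [Submodule.quotEquivOfEq_mk]
    exact Φhi.quotKerEquivRange_apply_mk c
  let L : (LinearMap.range Φlo) →ₗᵢ[ℂ] EuclideanSpace ℂ (Fin r) :=
    { toLinearMap := (LinearMap.range Φhi).subtype ∘ₗ (U0 : LinearMap.range Φlo →ₗ[ℂ] LinearMap.range Φhi)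
      norm_map' := by
        rintro ⟨w, c, rfl⟩
        show ‖(U0 ⟨Φlo c, LinearMap.mem_range_self _ c⟩ : EuclideanSpace ℂ (Fin r))‖ = _
        rw [hU0 c]
        rw [show ‖(⟨Φlo c, LinearMap.mem_range_self _ c⟩ : LinearMap.range Φlo)‖ = ‖Φlo c‖
          from rfl]
        rw [@norm_eq_sqrt_re_inner ℂ, @norm_eq_sqrt_re_inner ℂ, hΦinner] }
  set U := L.extend with hU
  have hUb : ∀ j : Fin m, U (b j.castSucc) = b j.succ := by
    intro j
    have h1 : Φlo (Pi.single j (1:ℂ)) = b j.castSucc := ctLcomb_single _ j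
    have h2 : Φhi (Pi.single j (1:ℂ)) = b j.succ := ctLcomb_single _ j
    have hmem : b j.castSucc ∈ LinearMap.range Φlo := ⟨Pi.single j (1:ℂ), h1⟩
    have h3 := L.extend_apply ⟨b j.castSucc, hmem⟩
    have h4 : (⟨b j.castSucc, hmem⟩ : LinearMap.range Φlo)
        = ⟨Φlo (Pi.single j (1:ℂ)), LinearMap.mem_range_self _ _⟩ := Subtype.ext h1.symm
    calc U (b j.castSucc) = L ⟨b j.castSucc, hmem⟩ := h3
      _ = (U0 ⟨Φlo (Pi.single j (1:ℂ)), LinearMap.mem_range_self _ _⟩ : EuclideanSpace ℂ (Fin r)) := by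
          rw [h4]; rfl
      _ = Φhi (Pi.single j (1:ℂ)) := hU0 _
      _ = b j.succ := h2
  have hpow : ∀ j : Fin (m+1), b j = (U.toLinearMap ^ (j : ℕ)) (b 0) := by
    intro j
    induction j using Fin.induction with
    | zero => simp
    | succ i ih =>
      simp only [Fin.coe_castSucc] at ih
      rw [Fin.val_succ, pow_succ']
      rw [Module.End.mul_apply, ← ih]
      exact (hUb i).symm
  obtain ⟨v, μ, hμ1, hμe⟩ := ct_isometry_spectral U
  set c : Fin r → ℂ := fun i => v.repr (b 0) i with hc
  have hb0 : b 0 = ∑ i, c i • v i := (v.sum_repr (b 0)).symm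
  have hUk : ∀ (k : ℕ) (i : Fin r), (U.toLinearMap ^ k) (v i) = μ i ^ k • v i := by
    intro k i
    induction k with
    | zero => simp
    | succ k ih =>
      rw [pow_succ', Module.End.mul_apply, ih]
      rw [show (U.toLinearMap) (μ i ^ k • v i) = U (μ i ^ k • v i) from rfl]
      rw [U.map_smul, hμe i, smul_smul, ← pow_succ]
  have hbj : ∀ j : Fin (m+1), b j = ∑ i, (μ i ^ (j : ℕ) * c i) • v i := by
    intro j
    rw [hpow j, hb0, map_sum]
    refine Finset.sum_congr rfl fun i _ => ?_
    rw [LinearMap.map_smul, hUk, smul_smul, mul_comm]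
  have hT : ∀ j k : Fin (m+1), T j k
      = ∑ i, ((Complex.normSq (c i) : ℝ) : ℂ) * ((starRingEnd ℂ) (μ i)) ^ (j : ℕ) * μ i ^ (k : ℕ) := by
    intro j k
    rw [← hGram, hbj j, hbj k]
    rw [v.orthonormal.inner_sum]
    refine Finset.sum_congr rfl fun i _ => ?_
    rw [_root_.map_mul, map_pow]
    rw [show ((Complex.normSq (c i) : ℝ) : ℂ) = (starRingEnd ℂ) (c i) * c i by
      rw [← Complex.mul_conj]; ring]
    ring
  have hconjabs : ∀ i, ‖(starRingEnd ℂ) (μ i)‖ = 1 := by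
    intro i; rw [Complex.norm_conj]; exact hμ1 i
  choose f0 hf0 hf0e using fun i => ct_exists_freq (hconjabs i)
  set d0 : Fin r → ℝ := fun i => Complex.normSq (c i) with hd0
  set M : ℝ → Matrix (Fin (m+1)) (Fin (m+1)) ℂ :=
    fun x => Matrix.vecMulVec (atom (m+1) x) (star (atom (m+1) x)) with hM
  have hTM : T = ∑ i, d0 i • M (f0 i) := by
    ext j k
    rw [hT j k, Matrix.sum_apply]
    refine Finset.sum_congr rfl fun i _ => ?_
    simp only [hM, Matrix.smul_apply, Matrix.vecMulVec_apply, Pi.star_apply]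
    rw [ct_atom_pow, ct_atom_pow, hf0e]
    rw [Complex.real_smul]
    rw [show (star (((starRingEnd ℂ) (μ i)) ^ (k : ℕ)) : ℂ) = μ i ^ (k : ℕ) by
      rw [star_pow, Complex.star_def, Complex.conj_conj]]
    ring
  set s : Finset ℝ := (Finset.univ.filter (fun i => d0 i ≠ 0)).image f0 with hs
  set D : ℝ → ℝ :=
    fun x => ∑ i ∈ (Finset.univ.filter (fun i => d0 i ≠ 0)).filter (fun i => f0 i = x), d0 i
    with hD
  have hT2 : T = ∑ x ∈ s, D x • M x := by
    rw [hTM]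
    rw [← Finset.sum_filter_of_ne (p := fun i => d0 i ≠ 0)
      (fun x _ hx h0 => hx (by rw [h0, zero_smul]))]
    rw [← Finset.sum_fiberwise_of_maps_to (g := f0) (t := s)
      (fun i hi => Finset.mem_image_of_mem f0 hi) (fun i => d0 i • M (f0 i))]
    refine Finset.sum_congr rfl fun x hx => ?_
    rw [hD]
    rw [Finset.sum_smul]
    refine Finset.sum_congr rfl fun i hi => ?_
    rw [(Finset.mem_filter.mp hi).2]
  have hDpos : ∀ x ∈ s, 0 < D x := by
    intro x hx
    obtain ⟨i0, hi0, hix⟩ := Finset.mem_image.mp hx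
    refine Finset.sum_pos' (fun i _ => Complex.normSq_nonneg _) ⟨i0, ?_, ?_⟩
    · exact Finset.mem_filter.mpr ⟨hi0, hix⟩
    · exact lt_of_le_of_ne (Complex.normSq_nonneg _)
        (Ne.symm ((Finset.mem_filter.mp hi0).2))
  have hcard_le : s.card ≤ r :=
    le_trans Finset.card_image_le (le_trans (Finset.card_filter_le _ _) (by simp))
  have hr_le : r ≤ s.card := by
    rw [← hrank, hT2]
    refine le_trans (ct_rank_sum_le s _) ?_
    refine le_trans (Finset.sum_le_sum fun x _ => ct_rank_smul_vecMulVec_le (D x) _ _) ?_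
    simp
  have hcard : s.card = r := le_antisymm hcard_le hr_le
  have hcard' : Fintype.card {x // x ∈ s} = r := by
    rw [Fintype.card_coe, hcard]
  let e2 : Fin r ≃ {x // x ∈ s} := (Fintype.equivFinOfCardEq hcard').symm
  refine ⟨fun k => (e2 k : ℝ), fun k => D (e2 k), ?_, ?_, ?_⟩
  · intro k
    obtain ⟨i0, _, hix⟩ := Finset.mem_image.mp (e2 k).2
    exact Set.mem_of_eq_of_mem hix.symm (hf0 i0)
  · intro k; exact hDpos _ (e2 k).2
  · rw [hT2]
    rw [← Finset.sum_coe_sort s (fun x => D x • M x)]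
    exact (Equiv.sum_comp e2 (fun x : {x // x ∈ s} => D (x : ℝ) • M (x : ℝ))).symm
end

section
/- Let V ∈ ℂ^{m×r}, D ∈ M_r(ℝ) a positive diagonal matrix, t > 0, y = V w for some w ∈ ℂ^r, and suppose V D V^* ⪰ (1/t) y y^*. If there exists q ∈ ℂ^m with V^* q = sign(w) (the entrywise phase vector of w), then tr(D) ≥ (1/t)(Σ_k |w_k|)². -/
open Matrix Complex Set
open scoped ComplexOrder

/-- The entrywise phase (sign) of a complex number. -/
noncomputable def csign (z : ℂ) : ℂ := if z = 0 then 0 else z / (‖z‖ : ℂ)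


lemma csign_conj_mul (z : ℂ) : (starRingEnd ℂ) (csign z) * z = (‖z‖ : ℂ) := by
  unfold csign
  by_cases h : z = 0
  · simp [h]
  · have habs : (‖z‖ : ℂ) ≠ 0 := by
      simpa using h
    rw [if_neg h, map_div₀, Complex.conj_ofReal, div_mul_eq_mul_div,
      div_eq_iff habs, ← Complex.normSq_eq_conj_mul_self, Complex.normSq_eq_norm_sq]
    push_cast
    ring

lemma csign_normSq_le (z : ℂ) : Complex.normSq (csign z) ≤ 1 := by
  by_cases h : z = 0
  · simp [csign, h]
  · rw [csign, if_neg h]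
    simp [Complex.normSq_div, Complex.normSq_eq_norm_sq, div_self, pow_ne_zero, norm_ne_zero_iff.mpr h]

/-- If `V D Vᴴ ⪰ (1/t) y yᴴ` with `y = V w`, `D = diag(d)` positive, `t > 0`, and some `q`
satisfies `Vᴴ q = sign(w)`, then `tr(D) ≥ (1/t)(Σ|w_k|)²`. -/
theorem trace_lower_bound (m r : ℕ) (V : Matrix (Fin m) (Fin r) ℂ)
    (d : Fin r → ℝ) (hd : ∀ k, 0 < d k) (t : ℝ) (ht : 0 < t)
    (w : Fin r → ℂ) (y : Fin m → ℂ) (hy : y = V.mulVec w)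
    (hpsd : (V * Matrix.diagonal (fun k => (d k : ℂ)) * Vᴴ -
        ((t : ℂ))⁻¹ • Matrix.vecMulVec y (star y)).PosSemidef)
    (hq : ∃ q : Fin m → ℂ, Vᴴ.mulVec q = fun k => csign (w k)) :
    (1 / t) * (∑ k, ‖w k‖) ^ 2 ≤ ∑ k, d k := by
  obtain ⟨q, hq⟩ := hq
  set s : Fin r → ℂ := fun k => csign (w k) with hs
  have hqV : star q ᵥ* V = star s := by
    rw [← Matrix.conjTranspose_conjTranspose V, ← Matrix.star_mulVec, hq]
  -- quadratic form value
  have h0 := hpsd.dotProduct_mulVec_nonneg q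
  have hA : star q ⬝ᵥ (V * Matrix.diagonal (fun k => (d k : ℂ)) * Vᴴ).mulVec q
      = ((∑ k, d k * Complex.normSq (s k) : ℝ) : ℂ) := by
    rw [Matrix.mul_assoc, ← Matrix.mulVec_mulVec, Matrix.dotProduct_mulVec, hqV,
      ← Matrix.mulVec_mulVec, hq]
    simp only [Matrix.mulVec_diagonal, dotProduct, Pi.star_apply]
    push_cast
    refine Finset.sum_congr rfl fun k _ => ?_
    rw [Complex.normSq_eq_conj_mul_self]
    simp only [RCLike.star_def]
    ring
  have hqy : star q ⬝ᵥ y = ((∑ k, ‖w k‖ : ℝ) : ℂ) := by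
    rw [hy, Matrix.dotProduct_mulVec, hqV]
    push_cast
    refine Finset.sum_congr rfl fun k _ => ?_
    simpa using csign_conj_mul (w k)
  have hB : star q ⬝ᵥ (Matrix.vecMulVec y (star y)).mulVec q
      = ((∑ k, ‖w k‖) ^ 2 : ℝ) := by
    have h1 : star y ⬝ᵥ q = ((∑ k, ‖w k‖ : ℝ) : ℂ) := by
      have := congrArg (starRingEnd ℂ) hqy
      rw [Complex.conj_ofReal] at this
      rw [← this]
      simp [dotProduct, Finset.mul_sum, map_sum, mul_comm]
    have h2 : (Matrix.vecMulVec y (star y)).mulVec q = (star y ⬝ᵥ q) • y := by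
      ext i
      simp [Matrix.vecMulVec, Matrix.mulVec, dotProduct, Finset.mul_sum, mul_comm,
        mul_left_comm]
    rw [h2, dotProduct_smul, h1, hqy, smul_eq_mul]
    push_cast
    ring
  rw [Matrix.sub_mulVec, dotProduct_sub, hA, Matrix.smul_mulVec,
    dotProduct_smul, hB] at h0
  have hreal : (0 : ℝ) ≤ (∑ k, d k * Complex.normSq (s k)) - t⁻¹ * (∑ k, ‖w k‖) ^ 2 := by
    have : ((0 : ℝ) : ℂ) ≤ (((∑ k, d k * Complex.normSq (s k)) - t⁻¹ * (∑ k, ‖w k‖) ^ 2 : ℝ) : ℂ) := by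
      push_cast
      rw [smul_eq_mul] at h0
      convert h0 using 1
      push_cast
      ring
    exact_mod_cast this
  have hle : ∑ k, d k * Complex.normSq (s k) ≤ ∑ k, d k := by
    refine Finset.sum_le_sum fun k _ => ?_
    calc d k * Complex.normSq (s k) ≤ d k * 1 :=
          mul_le_mul_of_nonneg_left (csign_normSq_le (w k)) (hd k).le
      _ = d k := mul_one _
  rw [one_div]
  linarith
end
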